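/- Let A be a connected zero-sum arrowflow on a tree T, with (a,b) the unique arc of multiplicity 2 in A. For any catalyst (σ, f) ∈ C(A), letting i and j be the two vertices with f(i) = f(j) = (a,b), the arc (a,b) is a step of both P(i, σ(j)) and P(j, σ(i)); hence (σ∘(i j), f) is again a catalyst in C(A), and the resulting map is a sign-reversing fixed-point-free involution on C(A), so Σ_{κ ∈ C(A)} sign(κ) = 0. -/

import Mathlib

open scoped Classical

/-- `IsStep G k m a b` : the arc `(a, b)` is a step of the unique path from `k` to `m`. -/
def IsStep {V : Type*} (G : SimpleGraph V) (k m a b : V) : Prop :=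
  ∃ p : G.Walk k m, p.IsPath ∧ ∃ d ∈ p.darts, d.toProd = (a, b)

/-- A catalyst for `G`. -/
def IsCatalyst {n : ℕ} (G : SimpleGraph (Fin n))
    (κ : Equiv.Perm (Fin n) × (Fin n → Fin n × Fin n)) : Prop :=
  ∀ k, IsStep G k (κ.1 k) (κ.2 k).1 (κ.2 k).2

/-- The arrowflow induced by `f`. -/
def flowOf {n : ℕ} (f : Fin n → Fin n × Fin n) : Multiset (Fin n × Fin n) :=
  Multiset.map f Finset.univ.val

/-- The arrowflow class of `A`. -/
def classOf {n : ℕ} (G : SimpleGraph (Fin n)) (A : Multiset (Fin n × Fin n)) :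
    Set (Equiv.Perm (Fin n) × (Fin n → Fin n × Fin n)) :=
  {κ | IsCatalyst G κ ∧ flowOf κ.2 = A}

lemma walk_step_side {V : Type*} {G : SimpleGraph V} {a b k m : V}
    (p : G.Walk k m) (hp : p.IsPath) (hd : ∃ d ∈ p.darts, d.toProd = (a, b)) :
    (G \ SimpleGraph.fromEdgeSet {s(a,b)}).Reachable k a ∧
    (G \ SimpleGraph.fromEdgeSet {s(a,b)}).Reachable b m := by
  induction p with
  | nil => simp at hd
  | @cons u v w h q ih =>
    obtain ⟨d, hdmem, hdp⟩ := hd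
    rw [SimpleGraph.Walk.darts_cons, List.mem_cons] at hdmem
    have hq : q.IsPath := hp.of_cons
    have hnodup : (SimpleGraph.Walk.cons h q).edges.Nodup := hp.isTrail.edges_nodup
    rw [SimpleGraph.Walk.edges_cons, List.nodup_cons] at hnodup
    have hqG' : ∀ e ∈ q.edges, e ∈ (G \ SimpleGraph.fromEdgeSet {s(a,b)}).edgeSet →
        True := fun _ _ _ => trivial
    rcases hdmem with hdhead | hdq
    · -- head dart is (a,b): u = a, v = b
      have hu : u = a := by rw [hdhead] at hdp; exact (Prod.ext_iff.1 hdp).1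
      have hv : v = b := by rw [hdhead] at hdp; exact (Prod.ext_iff.1 hdp).2
      have hna : s(a,b) ∉ q.edges := by rw [← hu, ← hv]; exact hnodup.1
      constructor
      · rw [hu]
      · -- transfer q to G'
        have hsub : ∀ e ∈ q.edges, e ∈ (G \ SimpleGraph.fromEdgeSet {s(a,b)}).edgeSet := by
          intro e he
          have heG : e ∈ G.edgeSet := q.edges_subset_edgeSet he
          have hne : e ≠ s(a,b) := fun hh => hna (hh ▸ he)
          induction e with
          | h x y =>
            simp only [SimpleGraph.mem_edgeSet, SimpleGraph.sdiff_adj,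
              SimpleGraph.fromEdgeSet_adj, Set.mem_singleton_iff] at *
            exact ⟨heG, fun hc => hne hc.1⟩
        exact hv ▸ (⟨q.transfer _ hsub⟩ : (G \ SimpleGraph.fromEdgeSet {s(a,b)}).Reachable v w)
    · obtain ⟨h1, h2⟩ := ih hq ⟨d, hdq, hdp⟩
      refine ⟨.trans ?_ h1, h2⟩
      have hne : s(u,v) ≠ s(a,b) := by
        intro hc
        have hmem : d.edge ∈ q.edges := List.mem_map_of_mem hdq
        have hde : d.edge = s(a,b) := by
          simp [SimpleGraph.Dart.edge, hdp]
        rw [hde, ← hc] at hmem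
        exact hnodup.1 hmem
      have : (G \ SimpleGraph.fromEdgeSet {s(a,b)}).Adj u v := by
        simp only [SimpleGraph.sdiff_adj, SimpleGraph.fromEdgeSet_adj,
          Set.mem_singleton_iff]
        exact ⟨h, fun hc => hne hc.1⟩
      exact this.reachable

lemma side_step {V : Type*} {G : SimpleGraph V} (hG : G.IsAcyclic) {a b k m : V}
    (hab : G.Adj a b)
    (h1 : (G \ SimpleGraph.fromEdgeSet {s(a,b)}).Reachable k a)
    (h2 : (G \ SimpleGraph.fromEdgeSet {s(a,b)}).Reachable b m) :
    IsStep G k m a b := by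
  set G' := G \ SimpleGraph.fromEdgeSet {s(a,b)} with hG'
  have hbridge : ¬ G'.Reachable a b :=
    ((SimpleGraph.isAcyclic_iff_forall_adj_isBridge.1 hG) hab)
  obtain ⟨p1⟩ := h1
  obtain ⟨p2⟩ := h2
  set q1 : G'.Walk k a := p1.toPath.1 with hq1
  set q2 : G'.Walk b m := p2.toPath.1 with hq2
  have hle : G' ≤ G := sdiff_le
  have hs1 : ∀ e ∈ q1.edges, e ∈ G.edgeSet := fun e he =>
    SimpleGraph.edgeSet_mono hle (q1.edges_subset_edgeSet he)
  have hs2 : ∀ e ∈ q2.edges, e ∈ G.edgeSet := fun e he =>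
    SimpleGraph.edgeSet_mono hle (q2.edges_subset_edgeSet he)
  set w1 : G.Walk k a := q1.transfer G hs1 with hw1
  set w2 : G.Walk b m := q2.transfer G hs2 with hw2
  set w : G.Walk k m := w1.append (SimpleGraph.Walk.cons hab w2) with hw
  refine ⟨w, ?_, ⟨(a,b), hab⟩, ?_, rfl⟩
  · rw [SimpleGraph.Walk.isPath_def, hw, SimpleGraph.Walk.support_append,
      SimpleGraph.Walk.support_cons, List.tail_cons, SimpleGraph.Walk.support_transfer,
      SimpleGraph.Walk.support_transfer]
    refine List.Nodup.append ?_ ?_ ?_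
    · exact (p1.toPath.2).support_nodup
    · exact (p2.toPath.2).support_nodup
    · intro v hv1 hv2
      have r1 : G'.Reachable v a := ⟨q1.dropUntil v hv1⟩
      have r2 : G'.Reachable b v := ⟨q2.takeUntil v hv2⟩
      exact hbridge (r1.symm.trans r2.symm)
  · rw [hw, SimpleGraph.Walk.darts_append, SimpleGraph.Walk.darts_cons]
    simp


lemma step_side {V : Type*} {G : SimpleGraph V} {a b k m : V} (h : IsStep G k m a b) :
    (G \ SimpleGraph.fromEdgeSet {s(a,b)}).Reachable k a ∧
    (G \ SimpleGraph.fromEdgeSet {s(a,b)}).Reachable b m := by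
  obtain ⟨p, hp, hd⟩ := h
  exact walk_step_side p hp hd

/-- For a connected zero-sum arrowflow `A` with repeated arc `(a,b)` of multiplicity 2:
for any catalyst `(σ, f) ∈ C(A)` and the two vertices `i ≠ j` with
`f i = f j = (a,b)`, the arc `(a,b)` is a step of both `P(i, σ j)` and `P(j, σ i)`,
so `(σ∘(i j), f)` is again a catalyst in `C(A)`; the resulting map is a sign-reversing
fixed-point-free involution, whence the signed sum over `C(A)` vanishes. -/
theorem connected_zero_sum_involution {n : ℕ}
    (G : SimpleGraph (Fin n)) (hG : G.IsTree)
    (A : Multiset (Fin n × Fin n))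
    (hcard : Multiset.card A = n)
    (harc : ∀ c ∈ A, G.Adj c.1 c.2)
    (hconn : ∀ e ∈ G.edgeSet, ∃ c ∈ A, s(c.1, c.2) = e)
    (a b : Fin n) (hab : G.Adj a b)
    (hmult : A.count (a, b) = 2) :
    (∀ κ ∈ classOf G A, ∀ i j : Fin n, i ≠ j →
        κ.2 i = (a, b) → κ.2 j = (a, b) →
        IsStep G i (κ.1 j) a b ∧ IsStep G j (κ.1 i) a b ∧
        (κ.1 * Equiv.swap i j, κ.2) ∈ classOf G A ∧
        Equiv.Perm.sign (κ.1 * Equiv.swap i j) = - Equiv.Perm.sign κ.1 ∧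
        (κ.1 * Equiv.swap i j, κ.2) ≠ κ ∧
        ((κ.1 * Equiv.swap i j) * Equiv.swap i j, κ.2) = κ) ∧
    ∑ κ : {κ // κ ∈ classOf G A}, (Equiv.Perm.sign κ.1.1 : ℤ) = 0 := by
  have hmain : ∀ κ ∈ classOf G A, ∀ i j : Fin n, i ≠ j →
        κ.2 i = (a, b) → κ.2 j = (a, b) →
        IsStep G i (κ.1 j) a b ∧ IsStep G j (κ.1 i) a b ∧
        (κ.1 * Equiv.swap i j, κ.2) ∈ classOf G A ∧
        Equiv.Perm.sign (κ.1 * Equiv.swap i j) = - Equiv.Perm.sign κ.1 ∧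
        (κ.1 * Equiv.swap i j, κ.2) ≠ κ ∧
        ((κ.1 * Equiv.swap i j) * Equiv.swap i j, κ.2) = κ := by
    rintro ⟨σ, f⟩ ⟨hcat, hflow⟩ i j hij hi hj
    replace hi : f i = (a, b) := hi
    replace hj : f j = (a, b) := hj
    have hstepi : IsStep G i (σ i) a b := by
      have := hcat i; simp only [] at this; rw [hi] at this; exact this
    have hstepj : IsStep G j (σ j) a b := by
      have := hcat j; simp only [] at this; rw [hj] at this; exact this
    obtain ⟨ria, rbi⟩ := step_side hstepi
    obtain ⟨rja, rbj⟩ := step_side hstepj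
    have stepA : IsStep G i (σ j) a b := side_step hG.2 hab ria rbj
    have stepB : IsStep G j (σ i) a b := side_step hG.2 hab rja rbi
    have happi : (σ * Equiv.swap i j) i = σ j := by
      simp [Equiv.Perm.mul_apply]
    have happj : (σ * Equiv.swap i j) j = σ i := by
      simp [Equiv.Perm.mul_apply]
    have hcat' : IsCatalyst G (σ * Equiv.swap i j, f) := by
      intro k
      rcases eq_or_ne k i with rfl | hki
      · show IsStep G k ((σ * Equiv.swap k j) k) (f k).1 (f k).2
        rw [happi, hi]; exact stepA
      rcases eq_or_ne k j with rfl | hkj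
      · show IsStep G k ((σ * Equiv.swap i k) k) (f k).1 (f k).2
        rw [happj, hj]; exact stepB
      · show IsStep G k ((σ * Equiv.swap i j) k) (f k).1 (f k).2
        rw [show (σ * Equiv.swap i j) k = σ k by
          simp [Equiv.Perm.mul_apply, Equiv.swap_apply_of_ne_of_ne hki hkj]]
        exact hcat k
    refine ⟨stepA, stepB, ⟨hcat', hflow⟩, ?_, ?_, ?_⟩
    · simp [Equiv.Perm.sign_swap hij]
    · intro hcontra
      have h1 : σ * Equiv.swap i j = σ := congrArg Prod.fst hcontra
      have := congrArg (fun τ : Equiv.Perm (Fin n) => τ i) h1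
      simp only [happi] at this
      exact hij (σ.injective this).symm
    · rw [mul_assoc, Equiv.swap_mul_self, mul_one]
  refine ⟨hmain, ?_⟩
  classical
  have hScard : ∀ κ : (Equiv.Perm (Fin n) × (Fin n → Fin n × Fin n)), κ ∈ classOf G A →
      (Finset.univ.filter (fun k => (a, b) = κ.2 k)).card = 2 := by
    rintro ⟨σ, f⟩ ⟨-, hflow⟩
    have h1 : Multiset.count (a, b) (flowOf f) = 2 := by
      rw [show flowOf f = flowOf (σ, f).2 from rfl, hflow]; exact hmult
    rw [flowOf, Multiset.count_map] at h1
    exact h1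
  set S : {κ // κ ∈ classOf G A} → Finset (Fin n) :=
    fun κ => Finset.univ.filter (fun k => (a, b) = κ.1.2 k) with hS
  have hScard2 : ∀ κ, (S κ).card = 2 := fun κ => hScard κ.1 κ.2
  have hSne : ∀ κ, (S κ).Nonempty := fun κ => Finset.card_pos.1 (by rw [hScard2]; norm_num)
  have hlt : ∀ κ, (S κ).min' (hSne κ) < (S κ).max' (hSne κ) :=
    fun κ => Finset.min'_lt_max'_of_card _ (by rw [hScard2]; norm_num)
  have hmemi : ∀ κ : {κ // κ ∈ classOf G A}, κ.1.2 ((S κ).min' (hSne κ)) = (a, b) := by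
    intro κ
    have := (S κ).min'_mem (hSne κ)
    exact (Finset.mem_filter.1 this).2.symm
  have hmemj : ∀ κ : {κ // κ ∈ classOf G A}, κ.1.2 ((S κ).max' (hSne κ)) = (a, b) := by
    intro κ
    have := (S κ).max'_mem (hSne κ)
    exact (Finset.mem_filter.1 this).2.symm
  have key := fun κ : {κ // κ ∈ classOf G A} =>
    hmain κ.1 κ.2 _ _ (ne_of_lt (hlt κ)) (hmemi κ) (hmemj κ)
  refine Finset.sum_involution
    (fun κ _ => ⟨(κ.1.1 * Equiv.swap ((S κ).min' (hSne κ)) ((S κ).max' (hSne κ)), κ.1.2),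
      (key κ).2.2.1⟩) ?_ ?_ (fun κ _ => Finset.mem_univ _) ?_
  · intro κ hκ
    have hs := (key κ).2.2.2.1
    simp only []
    rw [hs]
    push_cast
    ring
  · intro κ hκ _ heq
    exact (key κ).2.2.2.2.1 (congrArg Subtype.val heq)
  · intro κ hκ
    exact Subtype.ext ((key κ).2.2.2.2.2)
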